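/- Let a > 1. There exist constants ρ₁ > 0 and ρ₂ > 0 such that ρ(x) = (ρ₁/π)|x − z₁|^{1/2}(1 + O(|x − z₁|)) as x → z₁ with x ∈ (z₂,z₁), and ρ(x) = (ρ₂/π)|x − z₂|^{1/2}(1 + O(|x − z₂|)) as x → z₂ with x ∈ (z₂,z₁); by the symmetry ρ(−x) = ρ(x), the same square-root vanishing with the same constants ρ₁, ρ₂ holds at the edge points −z₁ and −z₂ from within (−z₁,−z₂). In particular ρ vanishes like a square root at each edge point of its support. -/

import Mathlib

open MeasureTheory Filter Topology Polynomial Asymptotics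

noncomputable section

/-- `√(1+8a²)` -/
def s8 (a : ℝ) : ℝ := Real.sqrt (1 + 8 * a ^ 2)

/-- the critical point `p` -/
def pBr (a : ℝ) : ℝ := Real.sqrt (1 / 2 + a ^ 2 - s8 a / 2)

/-- the critical point `q` -/
def qBr (a : ℝ) : ℝ := Real.sqrt (1 / 2 + a ^ 2 + s8 a / 2)

/-- the right edge point `z₁` -/
def z1 (a : ℝ) : ℝ := qBr a * (s8 a + 3) / (s8 a + 1)

/-- the left edge point `z₂` of the right interval -/
def z2 (a : ℝ) : ℝ := pBr a * (s8 a - 3) / (s8 a - 1)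

open scoped Classical in
/-- the Pastur density: `(1/π)|Im ξ|` for a non-real root `ξ` of the Pastur cubic, `0` else. -/
def pasturRho (a x : ℝ) : ℝ :=
  if h : ∃ ξ : ℂ, ξ ^ 3 - (x : ℂ) * ξ ^ 2 - ((a : ℂ) ^ 2 - 1) * ξ + (x : ℂ) * (a : ℂ) ^ 2 = 0 ∧
      ξ.im ≠ 0
  then |h.choose.im| / Real.pi
  else 0

/-- For `a > 1` there are constants `ρ₁, ρ₂ > 0` such that `ρ` vanishes like a
square root at the edge points: `ρ(x) = (ρ₁/π)|x - z₁|^{1/2}(1 + O(|x - z₁|))` as `x → z₁`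
from inside `(z₂,z₁)`, `ρ(x) = (ρ₂/π)|x - z₂|^{1/2}(1 + O(|x - z₂|))` as `x → z₂` from inside
`(z₂,z₁)`, and by the symmetry `ρ(-x) = ρ(x)` the same holds with the same constants at
`-z₁` and `-z₂` from inside `(-z₁,-z₂)`. -/
def Rf (a u : ℝ) : ℝ := Real.sqrt (1 + 16 * a ^ 2 * u ^ 2)
def wf (a u : ℝ) : ℝ := (1 - 2 * u ^ 2 - 2 * a ^ 2 + Rf a u) / 2
def Xf (a u : ℝ) : ℝ := 2 * u * (1 - 2 * a ^ 2 + Rf a u) / (1 + Rf a u)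
def wdf (a u : ℝ) : ℝ := -2 * u + 8 * a ^ 2 * u / Rf a u
def Xdf (a u : ℝ) : ℝ :=
  2 * (1 - 2 * a ^ 2 + Rf a u) / (1 + Rf a u) +
    64 * a ^ 4 * u ^ 2 / (Rf a u * (1 + Rf a u) ^ 2)

section facts
variable {a : ℝ} (ha : 1 < a)

lemma hs2 : (s8 a) ^ 2 = 1 + 8 * a ^ 2 := Real.sq_sqrt (by positivity)
lemma hs0 : 0 < s8 a := Real.sqrt_pos.2 (by positivity)
include ha
lemma hs3 : 3 < s8 a := by
  nlinarith [hs2 (a := a), hs0 (a := a), sq_nonneg a, ha]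
lemma ha2 : 1 < a ^ 2 := by nlinarith
lemma hslt : s8 a < 1 + 2 * a ^ 2 := by
  nlinarith [hs2 (a := a), hs0 (a := a), ha2 ha, sq_nonneg (s8 a - (1 + 2 * a ^ 2))]
lemma h4s : s8 a < 4 * a ^ 2 := by
  nlinarith [hs2 (a := a), hs0 (a := a), ha2 ha, sq_nonneg (s8 a - 4 * a ^ 2)]
lemma hq2 : (qBr a) ^ 2 = 1 / 2 + a ^ 2 + s8 a / 2 :=
  Real.sq_sqrt (by nlinarith [hs0 (a := a)])
lemma hp2 : (pBr a) ^ 2 = 1 / 2 + a ^ 2 - s8 a / 2 :=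
  Real.sq_sqrt (by nlinarith [hslt ha])
lemma hq0 : 0 < qBr a := Real.sqrt_pos.2 (by nlinarith [hs0 (a := a)])
lemma hp0 : 0 < pBr a := Real.sqrt_pos.2 (by nlinarith [hslt ha])
lemma hpq : pBr a < qBr a := by
  have h1 := hp2 ha; have h2 := hq2 ha
  nlinarith [hp0 ha, hq0 ha, hs0 (a := a)]
end facts

section Rfacts
variable {a : ℝ} (ha : 1 < a)

lemma hRpos (u : ℝ) : 0 < 1 + 16 * a ^ 2 * u ^ 2 := by positivity
lemma hR1 (u : ℝ) : 1 ≤ Rf a u := by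
  rw [show (1:ℝ) = Real.sqrt 1 by simp [Real.sqrt_one]]
  exact Real.sqrt_le_sqrt (by nlinarith [sq_nonneg (a*u)])
lemma hR0 (u : ℝ) : 0 < Rf a u := lt_of_lt_of_le one_pos (hR1 u)
lemma hR2 (u : ℝ) : (Rf a u) ^ 2 = 1 + 16 * a ^ 2 * u ^ 2 :=
  Real.sq_sqrt (hRpos u).le
include ha
lemma hRq : Rf a (qBr a) = s8 a + 4 * a ^ 2 := by
  rw [Rf, show 1 + 16 * a ^ 2 * (qBr a) ^ 2 = (s8 a + 4 * a ^ 2) ^ 2 by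
    nlinarith [hq2 ha, hs2 (a := a)]]
  exact Real.sqrt_sq (by nlinarith [hs0 (a := a)])
lemma hRp : Rf a (pBr a) = 4 * a ^ 2 - s8 a := by
  rw [Rf, show 1 + 16 * a ^ 2 * (pBr a) ^ 2 = (4 * a ^ 2 - s8 a) ^ 2 by
    nlinarith [hp2 ha, hs2 (a := a)]]
  exact Real.sqrt_sq (by nlinarith [h4s ha])
lemma hwq0 : wf a (qBr a) = 0 := by
  rw [wf, hRq ha]; nlinarith [hq2 ha]
lemma hwp0 : wf a (pBr a) = 0 := by
  rw [wf, hRp ha]; nlinarith [hp2 ha]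
lemma hXq : Xf a (qBr a) = z1 a := by
  rw [Xf, hRq ha, z1]
  have h1 : (0:ℝ) < 1 + (s8 a + 4 * a ^ 2) := by nlinarith [hs0 (a := a)]
  have h2 : (0:ℝ) < s8 a + 1 := by nlinarith [hs0 (a := a)]
  rw [div_eq_div_iff h1.ne' h2.ne']
  linear_combination (qBr a) * hs2 (a := a)
lemma hXp : Xf a (pBr a) = z2 a := by
  rw [Xf, hRp ha, z2]
  have h1 : (0:ℝ) < 1 + (4 * a ^ 2 - s8 a) := by nlinarith [h4s ha]
  have h2 : (0:ℝ) < s8 a - 1 := by nlinarith [hs3 ha]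
  rw [div_eq_div_iff h1.ne' h2.ne']
  linear_combination (-(pBr a)) * hs2 (a := a)
end Rfacts

section ident
variable {a : ℝ}

lemma ident2 (u : ℝ) :
    (Xf a u - 2 * u) * (u ^ 2 + wf a u) = -(Xf a u * a ^ 2) := by
  have h0 : (0:ℝ) < 1 + Rf a u := by nlinarith [hR0 (a := a) u]
  rw [Xf, wf]
  field_simp
  ring

lemma ident1 (u : ℝ) :
    u ^ 2 + wf a u + 2 * u * (Xf a u - 2 * u) = 1 - a ^ 2 := by
  have h0 : (0:ℝ) < 1 + Rf a u := by nlinarith [hR0 (a := a) u]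
  have h2 := hR2 (a := a) u
  rw [Xf, wf]
  field_simp
  linear_combination h2
end ident

lemma pasturRho_eq (a x u v : ℝ) (hv : 0 < v)
    (h1 : u ^ 2 + v ^ 2 + 2 * u * (x - 2 * u) = 1 - a ^ 2)
    (h2 : (x - 2 * u) * (u ^ 2 + v ^ 2) = -(x * a ^ 2)) :
    pasturRho a x = v / Real.pi := by
  have key : ∀ ξ : ℂ, ξ ^ 3 - (x : ℂ) * ξ ^ 2 - ((a : ℂ) ^ 2 - 1) * ξ + (x : ℂ) * (a : ℂ) ^ 2
      = (ξ ^ 2 - 2 * u * ξ + (u ^ 2 + v ^ 2)) * (ξ - ((x : ℂ) - 2 * u)) := by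
    intro ξ
    have h1' : (u:ℂ) ^ 2 + (v:ℂ) ^ 2 + 2 * u * ((x:ℂ) - 2 * u) = 1 - (a:ℂ) ^ 2 := by
      exact_mod_cast congrArg (fun t : ℝ => (t : ℂ)) h1
    have h2' : ((x:ℂ) - 2 * u) * ((u:ℂ) ^ 2 + (v:ℂ) ^ 2) = -((x:ℂ) * (a:ℂ) ^ 2) := by
      exact_mod_cast congrArg (fun t : ℝ => (t : ℂ)) h2
    linear_combination (-ξ) * h1' + h2'
  set ξ₀ : ℂ := ⟨u, v⟩ with hξ₀
  have hξ : ξ₀ = (u : ℂ) + (v : ℂ) * Complex.I := by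
    apply Complex.ext <;> simp [hξ₀]
  have hquad0 : ξ₀ ^ 2 - 2 * u * ξ₀ + ((u:ℂ) ^ 2 + (v:ℂ) ^ 2) = 0 := by
    rw [hξ]
    have : (Complex.I)^2 = -1 := Complex.I_sq
    linear_combination (v:ℂ)^2 * this
  have hroot : ξ₀ ^ 3 - (x : ℂ) * ξ₀ ^ 2 - ((a : ℂ) ^ 2 - 1) * ξ₀ + (x : ℂ) * (a : ℂ) ^ 2 = 0 := by
    rw [key ξ₀, hquad0, zero_mul]
  have h : ∃ ξ : ℂ, ξ ^ 3 - (x : ℂ) * ξ ^ 2 - ((a : ℂ) ^ 2 - 1) * ξ + (x : ℂ) * (a : ℂ) ^ 2 = 0 ∧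
      ξ.im ≠ 0 := ⟨ξ₀, hroot, by simp [hξ₀]; exact hv.ne'⟩
  rw [pasturRho, dif_pos h]
  obtain ⟨hη, hηim⟩ := h.choose_spec
  set η := h.choose with hηdef
  have hfac : (η ^ 2 - 2 * u * η + ((u:ℂ) ^ 2 + (v:ℂ) ^ 2)) * (η - ((x : ℂ) - 2 * u)) = 0 := by
    rw [← key η]; exact hη
  have hlin : η - ((x : ℂ) - 2 * u) ≠ 0 := by
    intro hc
    apply hηim
    rw [sub_eq_zero.mp hc]
    simp
  have hquad : η ^ 2 - 2 * u * η + ((u:ℂ) ^ 2 + (v:ℂ) ^ 2) = 0 := by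
    rcases mul_eq_zero.1 hfac with h' | h'
    · exact h'
    · exact absurd h' hlin
  have hsq : (η - (u:ℂ)) ^ 2 = -((v:ℂ) ^ 2) := by linear_combination hquad
  -- take imaginary/real parts
  have hre : (η.re - u) ^ 2 - η.im ^ 2 = -(v ^ 2) := by
    have := congrArg Complex.re hsq
    simpa [pow_two, Complex.mul_re, Complex.mul_im] using this
  have him : (η.re - u) * η.im + η.im * (η.re - u) = 0 := by
    have := congrArg Complex.im hsq
    simpa [pow_two, Complex.mul_re, Complex.mul_im] using this
  have hre0 : η.re - u = 0 := by
    rcases mul_eq_zero.1 (by linarith [him] : (η.re - u) * η.im = 0) with h' | h'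
    · exact h'
    · exact absurd h' hηim
  have him2 : η.im ^ 2 = v ^ 2 := by
    rw [hre0] at hre; nlinarith [hre]
  have : |η.im| = v := by
    rw [← Real.sqrt_sq_eq_abs, him2, Real.sqrt_sq hv.le]
  rw [this]

section rho
variable {a : ℝ}

lemma rho_pos_side {u : ℝ} (hw : 0 < wf a u) :
    pasturRho a (Xf a u) = Real.sqrt (wf a u) / Real.pi := by
  set v := Real.sqrt (wf a u) with hvdef
  have hv : 0 < v := Real.sqrt_pos.2 hw
  have hv2 : v ^ 2 = wf a u := Real.sq_sqrt hw.le
  exact pasturRho_eq a (Xf a u) u v hv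
    (by rw [hv2]; exact ident1 u) (by rw [hv2]; exact ident2 u)

lemma rho_neg_side {u : ℝ} (hw : 0 < wf a u) :
    pasturRho a (-Xf a u) = Real.sqrt (wf a u) / Real.pi := by
  set v := Real.sqrt (wf a u) with hvdef
  have hv : 0 < v := Real.sqrt_pos.2 hw
  have hv2 : v ^ 2 = wf a u := Real.sq_sqrt hw.le
  have i1 := ident1 (a := a) u
  have i2 := ident2 (a := a) u
  exact pasturRho_eq a (-Xf a u) (-u) v hv
    (by rw [hv2]; linarith [i1] )
    (by rw [hv2]; linear_combination -i2)
end rho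

section deriv
variable {a : ℝ}

lemma hasDeriv_Rf (u : ℝ) : HasDerivAt (Rf a) (16 * a ^ 2 * u / Rf a u) u := by
  have hg : HasDerivAt (fun u : ℝ => 1 + 16 * a ^ 2 * u ^ 2) (32 * a ^ 2 * u) u := by
    have := ((hasDerivAt_pow 2 u).const_mul (16 * a ^ 2)).const_add 1
    refine this.congr_deriv ?_
    push_cast; ring
  have h := (Real.hasDerivAt_sqrt (x := 1 + 16 * a ^ 2 * u ^ 2) (by positivity)).comp u hg
  refine h.congr_deriv ?_
  rw [Rf]
  field_simp [Real.sqrt_ne_zero'.2 (hRpos (a := a) u)]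
  ring

lemma hasDeriv_wf (u : ℝ) : HasDerivAt (wf a) (wdf a u) u := by
  have h1 : HasDerivAt (fun u : ℝ => 1 - 2 * u ^ 2 - 2 * a ^ 2 + Rf a u)
      (-(4 * u) + 16 * a ^ 2 * u / Rf a u) u := by
    have hpoly : HasDerivAt (fun u : ℝ => 1 - 2 * u ^ 2 - 2 * a ^ 2) (-(4 * u)) u := by
      have := (((hasDerivAt_pow 2 u).const_mul (2:ℝ)).const_sub 1).sub_const (2 * a ^ 2)
      refine this.congr_deriv ?_
      push_cast; ring
    exact hpoly.add (hasDeriv_Rf u)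
  have := h1.div_const 2
  refine this.congr_deriv ?_
  rw [wdf]
  have h0 : Rf a u ≠ 0 := (hR0 (a := a) u).ne'
  field_simp
  ring

lemma hasDeriv_Xf (u : ℝ) : HasDerivAt (Xf a) (Xdf a u) u := by
  have hR0' : Rf a u ≠ 0 := (hR0 (a := a) u).ne'
  have hD0 : 1 + Rf a u ≠ 0 := by nlinarith [hR0 (a := a) u]
  have hN : HasDerivAt (fun u : ℝ => 2 * u * (1 - 2 * a ^ 2 + Rf a u))
      (2 * (1 - 2 * a ^ 2 + Rf a u) + 2 * u * (16 * a ^ 2 * u / Rf a u)) u := by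
    have h1 : HasDerivAt (fun u : ℝ => 2 * u) 2 u := by
      simpa using (hasDerivAt_id u).const_mul (2:ℝ)
    have h2 : HasDerivAt (fun u : ℝ => 1 - 2 * a ^ 2 + Rf a u) (16 * a ^ 2 * u / Rf a u) u :=
      (hasDeriv_Rf u).const_add _
    exact h1.mul h2
  have hD : HasDerivAt (fun u : ℝ => 1 + Rf a u) (16 * a ^ 2 * u / Rf a u) u :=
    (hasDeriv_Rf u).const_add 1
  have h := hN.div hD hD0
  refine h.congr_deriv ?_
  rw [Xdf]
  field_simp
  ring
end deriv

section smooth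
variable {a : ℝ}

lemma contDiff_Rf : ∀ u : ℝ, ContDiffAt ℝ 1 (Rf a) u := by
  intro u
  have hinner : ContDiffAt ℝ 1 (fun u : ℝ => 1 + 16 * a ^ 2 * u ^ 2) u := by
    fun_prop
  exact (Real.contDiffAt_sqrt (hRpos (a := a) u).ne').comp u hinner

lemma contDiff_wdf : ∀ u : ℝ, ContDiffAt ℝ 1 (wdf a) u := by
  intro u
  have h1 : ContDiffAt ℝ 1 (fun u : ℝ => -2 * u) u := by fun_prop
  have h2 : ContDiffAt ℝ 1 (fun u : ℝ => 8 * a ^ 2 * u) u := by fun_prop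
  exact h1.add (h2.div (contDiff_Rf u) (hR0 (a := a) u).ne')

lemma contDiff_Xdf : ∀ u : ℝ, ContDiffAt ℝ 1 (Xdf a) u := by
  intro u
  have hR := contDiff_Rf (a := a) u
  have hR0' := (hR0 (a := a) u).ne'
  have hD0 : (1 : ℝ) + Rf a u ≠ 0 := by nlinarith [hR0 (a := a) u]
  have h1 : ContDiffAt ℝ 1 (fun u : ℝ => 2 * (1 - 2 * a ^ 2 + Rf a u)) u :=
    (contDiffAt_const (c := (2:ℝ))).mul ((contDiffAt_const (c := 1 - 2 * a ^ 2)).add hR)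
  have h2 : ContDiffAt ℝ 1 (fun u : ℝ => 1 + Rf a u) u := (contDiffAt_const (c := (1:ℝ))).add hR
  have h3 : ContDiffAt ℝ 1 (fun u : ℝ => 64 * a ^ 4 * u ^ 2) u := by fun_prop
  have h4 : ContDiffAt ℝ 1 (fun u : ℝ => Rf a u * (1 + Rf a u) ^ 2) u := hR.mul (h2.pow 2)
  have h40 : Rf a u * (1 + Rf a u) ^ 2 ≠ 0 := by
    apply mul_ne_zero hR0'
    positivity
  exact (h1.div h2 hD0).add (h3.div h4 h40)
end smooth

section signs
variable {a : ℝ} (ha : 1 < a)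
include ha

lemma hwdq : wdf a (qBr a) < 0 := by
  rw [wdf, hRq ha]
  have hs := hs0 (a := a)
  have hq := hq0 ha
  have hden : (0:ℝ) < s8 a + 4 * a ^ 2 := by nlinarith
  have : 8 * a ^ 2 * qBr a / (s8 a + 4 * a ^ 2) < 2 * qBr a := by
    rw [div_lt_iff₀ hden]; nlinarith
  linarith

lemma hwdp : 0 < wdf a (pBr a) := by
  rw [wdf, hRp ha]
  have hs := hs0 (a := a)
  have hp := hp0 ha
  have hden : (0:ℝ) < 4 * a ^ 2 - s8 a := by nlinarith [h4s ha]
  have : 2 * pBr a < 8 * a ^ 2 * pBr a / (4 * a ^ 2 - s8 a) := by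
    rw [lt_div_iff₀ hden]; nlinarith
  linarith

lemma hXdq : 0 < Xdf a (qBr a) := by
  rw [Xdf, hRq ha]
  have hs := hs0 (a := a)
  have ha2' := ha2 ha
  have h1 : (0:ℝ) < 2 * (1 - 2 * a ^ 2 + (s8 a + 4 * a ^ 2)) / (1 + (s8 a + 4 * a ^ 2)) := by
    apply div_pos <;> nlinarith
  have h2 : (0:ℝ) ≤ 64 * a ^ 4 * (qBr a) ^ 2 /
      ((s8 a + 4 * a ^ 2) * (1 + (s8 a + 4 * a ^ 2)) ^ 2) := by positivity
  linarith

lemma hXdp : 0 < Xdf a (pBr a) := by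
  rw [Xdf, hRp ha]
  have hs := hs0 (a := a)
  have hlt := hslt ha
  have h4 := h4s ha
  have h1 : (0:ℝ) < 2 * (1 - 2 * a ^ 2 + (4 * a ^ 2 - s8 a)) / (1 + (4 * a ^ 2 - s8 a)) := by
    apply div_pos <;> nlinarith
  have h2 : (0:ℝ) ≤ 64 * a ^ 4 * (pBr a) ^ 2 /
      ((4 * a ^ 2 - s8 a) * (1 + (4 * a ^ 2 - s8 a)) ^ 2) := by
    apply div_nonneg (by positivity)
    exact mul_nonneg (by nlinarith) (sq_nonneg _)
  linarith

lemma hz2pos : 0 < z2 a := by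
  rw [z2]
  have := hs3 ha
  apply div_pos (by nlinarith [hp0 ha]) (by linarith)

lemma hz12 : z2 a < z1 a := by
  have h3 := hs3 ha
  have hp := hp0 ha
  have hq := hq0 ha
  have hpq' := hpq ha
  have h1 : z2 a < pBr a := by
    rw [z2, div_lt_iff₀ (by linarith : (0:ℝ) < s8 a - 1)]
    nlinarith
  have h2 : qBr a < z1 a := by
    rw [z1, lt_div_iff₀ (by linarith : (0:ℝ) < s8 a + 1)]
    nlinarith
  linarith
end signs

set_option maxHeartbeats 1000000 in
lemma key_est (w X wd Xd : ℝ → ℝ) (b ε₀ : ℝ) (hε₀ : 0 < ε₀)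
    (hw : ∀ u, HasDerivAt w (wd u) u) (hX : ∀ u, HasDerivAt X (Xd u) u)
    (hwd : ContDiffAt ℝ 1 wd b) (hXd : ContDiffAt ℝ 1 Xd b)
    (hwb : w b = 0) (hαneg : wd b < 0) (hβpos : 0 < Xd b) :
    ∃ C δ : ℝ, 0 < C ∧ 0 < δ ∧ ∀ x ∈ Set.Ioo (X b - δ) (X b),
      ∃ u ∈ Set.Ioo (b - ε₀) b, X u = x ∧ 0 < w u ∧
        |Real.sqrt (w u) - Real.sqrt (-wd b / Xd b) * Real.sqrt (X b - x)| ≤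
          C * Real.sqrt (X b - x) * (X b - x) := by
  set α := -wd b with hαdef
  set β := Xd b with hβdef
  clear_value α β
  have hα0 : 0 < α := by rw [hαdef]; linarith
  have hβ0 : 0 < β := hβpos
  obtain ⟨K₁, t₁, ht₁, hL₁⟩ := hwd.exists_lipschitzOnWith
  obtain ⟨K₂, t₂, ht₂, hL₂⟩ := hXd.exists_lipschitzOnWith
  obtain ⟨r₁, hr₁, hball₁⟩ := Metric.mem_nhds_iff.1 ht₁
  obtain ⟨r₂, hr₂, hball₂⟩ := Metric.mem_nhds_iff.1 ht₂
  set K : ℝ := max (K₁ : ℝ) (K₂ : ℝ) + 1 with hKdef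
  have hK1K : (K₁ : ℝ) ≤ K := by
    rw [hKdef]; have := le_max_left (K₁:ℝ) (K₂:ℝ); linarith
  have hK2K : (K₂ : ℝ) ≤ K := by
    rw [hKdef]; have := le_max_right (K₁:ℝ) (K₂:ℝ); linarith
  have hK : 0 < K := by
    have h0 : (0:ℝ) ≤ max (K₁:ℝ) (K₂:ℝ) := le_trans K₁.coe_nonneg (le_max_left _ _)
    rw [hKdef]; linarith
  clear_value K
  set ε := min (min ε₀ (min (r₁ / 2) (r₂ / 2))) (min (β / (2 * K)) (α / (2 * K))) with hεdef
  have hε : 0 < ε := by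
    apply lt_min (lt_min hε₀ (lt_min (by linarith) (by linarith)))
    exact lt_min (by positivity) (by positivity)
  have hεε₀ : ε ≤ ε₀ := le_trans (min_le_left _ _) (min_le_left _ _)
  have hεr₁ : ε < r₁ := lt_of_le_of_lt
    (le_trans (min_le_left _ _) (le_trans (min_le_right _ _) (min_le_left _ _))) (by linarith)
  have hεr₂ : ε < r₂ := lt_of_le_of_lt
    (le_trans (min_le_left _ _) (le_trans (min_le_right _ _) (min_le_right _ _))) (by linarith)
  have hεβ : K * ε ≤ β / 2 := by
    have h : ε ≤ β / (2 * K) := le_trans (min_le_right _ _) (min_le_left _ _)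
    have h2 : K * ε ≤ K * (β / (2 * K)) := mul_le_mul_of_nonneg_left h hK.le
    have h3 : K * (β / (2 * K)) = β / 2 := by field_simp
    linarith
  have hεα : K * ε ≤ α / 2 := by
    have h : ε ≤ α / (2 * K) := le_trans (min_le_right _ _) (min_le_right _ _)
    have h2 : K * ε ≤ K * (α / (2 * K)) := mul_le_mul_of_nonneg_left h hK.le
    have h3 : K * (α / (2 * K)) = α / 2 := by field_simp
    linarith
  clear_value ε
  have hbt₁ : b ∈ t₁ := mem_of_mem_nhds ht₁
  have hbt₂ : b ∈ t₂ := mem_of_mem_nhds ht₂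
  -- main Taylor-type estimates
  have est : ∀ u, b - ε ≤ u → u < b →
      α / 2 * (b - u) ≤ w u ∧ |w u - α * (b - u)| ≤ K * (b - u) ^ 2 ∧
      β / 2 * (b - u) ≤ X b - X u ∧ |X b - X u - β * (b - u)| ≤ K * (b - u) ^ 2 := by
    intro u h1 h2
    have hd0 : 0 < b - u := by linarith
    have hdε : b - u ≤ ε := by linarith
    -- MVT for X
    obtain ⟨c, hc, hceq⟩ := exists_hasDerivAt_eq_slope X Xd h2
      (fun y _ => (hX y).continuousAt.continuousWithinAt) (fun y _ => hX y)
    obtain ⟨hcl, hcr⟩ := hc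
    have hct₂ : c ∈ t₂ := by
      apply hball₂
      rw [Metric.mem_ball, Real.dist_eq, abs_lt]
      constructor <;> linarith
    have hXc : |Xd c - β| ≤ K * (b - u) := by
      have hd := hL₂.dist_le_mul c hct₂ b hbt₂
      rw [Real.dist_eq, Real.dist_eq] at hd
      have h1' : |c - b| ≤ b - u := by
        rw [abs_le]; constructor <;> linarith
      rw [hβdef]
      calc |Xd c - Xd b| ≤ (K₂:ℝ) * |c - b| := hd
        _ ≤ K * (b - u) := mul_le_mul hK2K h1' (abs_nonneg _) hK.le
    have hXslope : X b - X u = Xd c * (b - u) := by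
      rw [hceq]; field_simp
    have hXtay : |X b - X u - β * (b - u)| ≤ K * (b - u) ^ 2 := by
      rw [hXslope, show Xd c * (b-u) - β * (b-u) = (Xd c - β) * (b-u) by ring, abs_mul,
        abs_of_pos hd0]
      calc |Xd c - β| * (b - u) ≤ (K * (b-u)) * (b-u) :=
            mul_le_mul_of_nonneg_right hXc hd0.le
        _ = K * (b-u)^2 := by ring
    have hXlow : β / 2 * (b - u) ≤ X b - X u := by
      have h' := (abs_le.1 hXtay).1
      have hKd : K * (b - u) ≤ β / 2 := by
        have := mul_le_mul_of_nonneg_left hdε hK.le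
        linarith
      have h4 : K * (b - u) ^ 2 ≤ β / 2 * (b - u) := by
        have h5 := mul_le_mul_of_nonneg_right hKd hd0.le
        calc K * (b - u) ^ 2 = K * (b - u) * (b - u) := by ring
          _ ≤ β / 2 * (b - u) := h5
      linarith
    -- MVT for w
    obtain ⟨c', hc', hceq'⟩ := exists_hasDerivAt_eq_slope w wd h2
      (fun y _ => (hw y).continuousAt.continuousWithinAt) (fun y _ => hw y)
    obtain ⟨hcl', hcr'⟩ := hc'
    have hct₁ : c' ∈ t₁ := by
      apply hball₁
      rw [Metric.mem_ball, Real.dist_eq, abs_lt]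
      constructor <;> linarith
    have hwc : |wd c' + α| ≤ K * (b - u) := by
      have hd := hL₁.dist_le_mul c' hct₁ b hbt₁
      rw [Real.dist_eq, Real.dist_eq] at hd
      have h1' : |c' - b| ≤ b - u := by
        rw [abs_le]; constructor <;> linarith
      have : wd c' + α = wd c' - wd b := by rw [hαdef]; ring
      rw [this]
      calc |wd c' - wd b| ≤ (K₁:ℝ) * |c' - b| := hd
        _ ≤ K * (b - u) := mul_le_mul hK1K h1' (abs_nonneg _) hK.le
    have hwslope : w u = -(wd c') * (b - u) := by
      have h := hceq'
      rw [hwb] at h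
      have h2' : wd c' * (b - u) = 0 - w u := by
        rw [h]; field_simp
      linarith [h2']
    have hwtay : |w u - α * (b - u)| ≤ K * (b - u) ^ 2 := by
      rw [hwslope, show -(wd c') * (b-u) - α * (b-u) = -((wd c' + α) * (b-u)) by ring,
        abs_neg, abs_mul, abs_of_pos hd0]
      calc |wd c' + α| * (b - u) ≤ (K * (b-u)) * (b-u) :=
            mul_le_mul_of_nonneg_right hwc hd0.le
        _ = K * (b-u)^2 := by ring
    have hwlow : α / 2 * (b - u) ≤ w u := by
      have h' := (abs_le.1 hwtay).1
      have hKd : K * (b - u) ≤ α / 2 := by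
        have := mul_le_mul_of_nonneg_left hdε hK.le
        linarith
      have h4 : K * (b - u) ^ 2 ≤ α / 2 * (b - u) := by
        have h5 := mul_le_mul_of_nonneg_right hKd hd0.le
        calc K * (b - u) ^ 2 = K * (b - u) * (b - u) := by ring
          _ ≤ α / 2 * (b - u) := h5
      linarith
    exact ⟨hwlow, hwtay, hXlow, hXtay⟩
  -- constants
  set C₀ : ℝ := K * (1 + α / β) * (2 / β) ^ 2 with hC₀def
  have hC₀ : 0 < C₀ := by rw [hC₀def]; positivity
  clear_value C₀
  set sα : ℝ := Real.sqrt (α / β) with hsαdef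
  have hsα : 0 < sα := by rw [hsαdef]; exact Real.sqrt_pos.2 (by positivity)
  set C : ℝ := C₀ / sα with hCdef
  have hC : 0 < C := by rw [hCdef]; positivity
  clear_value C
  have hXbe := (est (b - ε) le_rfl (by linarith)).2.2.1
  have hδpos : 0 < X b - X (b - ε) := by
    have h1 : β / 2 * (b - (b - ε)) = β / 2 * ε := by ring
    have h2 := mul_pos (by linarith : (0:ℝ) < β / 2) hε
    linarith [hXbe]
  refine ⟨C, X b - X (b - ε), hC, hδpos, ?_⟩
  intro x hx
  have hx1 : X (b - ε) < x := by linarith [hx.1]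
  have hx2 : x < X b := hx.2
  have hcont : ContinuousOn X (Set.Icc (b - ε) b) :=
    fun y _ => (hX y).continuousAt.continuousWithinAt
  obtain ⟨u, hu, hXu⟩ := intermediate_value_Ioo (by linarith : b - ε ≤ b) hcont ⟨hx1, hx2⟩
  obtain ⟨hwlow, hwtay, hXlow, hXtay⟩ := est u hu.1.le hu.2
  have hd0 : 0 < b - u := by linarith [hu.2]
  have hwpos : 0 < w u := lt_of_lt_of_le (by positivity) hwlow
  set t := X b - x with htdef
  have ht0 : 0 < t := by rw [htdef]; linarith
  have htX : t = X b - X u := by rw [htdef, hXu]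
  have hdt : b - u ≤ 2 / β * t := by
    rw [htX]
    have h := mul_le_mul_of_nonneg_left hXlow (by positivity : (0:ℝ) ≤ 2 / β)
    have h2 : 2 / β * (β / 2 * (b - u)) = b - u := by field_simp
    linarith
  have hd2 : (b - u) ^ 2 ≤ (2 / β) ^ 2 * t ^ 2 := by
    have := pow_le_pow_left₀ hd0.le hdt 2
    calc (b-u)^2 ≤ (2/β*t)^2 := this
      _ = (2/β)^2 * t^2 := by ring
  -- |w u - (α/β) t| ≤ C₀ t²
  have hwt : |w u - α / β * t| ≤ C₀ * t ^ 2 := by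
    have h1 : |t - β * (b - u)| ≤ K * (b - u) ^ 2 := by
      rw [htX]
      exact hXtay
    have e : w u - α / β * t = (w u - α * (b - u)) - α / β * (t - β * (b - u)) := by
      field_simp; ring
    rw [e]
    calc |(w u - α * (b - u)) - α / β * (t - β * (b - u))|
        ≤ |w u - α * (b - u)| + |α / β * (t - β * (b - u))| := abs_sub _ _
      _ = |w u - α * (b - u)| + α / β * |t - β * (b - u)| := by
          rw [abs_mul, abs_of_pos (by positivity : (0:ℝ) < α / β)]
      _ ≤ K * (b - u) ^ 2 + α / β * (K * (b - u) ^ 2) := by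
          refine add_le_add hwtay (mul_le_mul_of_nonneg_left h1 (by positivity))
      _ = (K * (1 + α / β)) * (b - u) ^ 2 := by ring
      _ ≤ (K * (1 + α / β)) * ((2 / β) ^ 2 * t ^ 2) := by
          refine mul_le_mul_of_nonneg_left hd2 (by positivity)
      _ = C₀ * t ^ 2 := by rw [hC₀def]; ring
  -- square root step
  set st := Real.sqrt t with hstdef
  have hst : 0 < st := by rw [hstdef]; exact Real.sqrt_pos.2 ht0
  have hstt : st * st = t := by rw [hstdef]; exact Real.mul_self_sqrt ht0.le
  have hsB : Real.sqrt (α / β * t) = sα * st := by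
    rw [hsαdef, hstdef, ← Real.sqrt_mul (by positivity : (0:ℝ) ≤ α/β)]
  have hsA : Real.sqrt (w u) * Real.sqrt (w u) = w u := Real.mul_self_sqrt hwpos.le
  have hkey : |Real.sqrt (w u) - sα * st| * (sα * st) ≤ C₀ * t ^ 2 := by
    have hBpos : 0 < α / β * t := by positivity
    have h1 : (Real.sqrt (w u) - sα * st) * (Real.sqrt (w u) + sα * st) = w u - α / β * t := by
      have h2 : (sα * st) * (sα * st) = α / β * t := by
        rw [← hsB]; exact Real.mul_self_sqrt hBpos.le
      linear_combination hsA - h2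
    have h2 : |Real.sqrt (w u) - sα * st| * (Real.sqrt (w u) + sα * st)
        = |w u - α / β * t| := by
      rw [← h1, abs_mul, abs_of_nonneg
        (by positivity : (0:ℝ) ≤ Real.sqrt (w u) + sα * st)]
    calc |Real.sqrt (w u) - sα * st| * (sα * st)
        ≤ |Real.sqrt (w u) - sα * st| * (Real.sqrt (w u) + sα * st) := by
          refine mul_le_mul_of_nonneg_left ?_ (abs_nonneg _)
          have := Real.sqrt_nonneg (w u); linarith
      _ = |w u - α / β * t| := h2
      _ ≤ C₀ * t ^ 2 := hwt
  have hCsα : C * sα = C₀ := by rw [hCdef]; field_simp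
  have hCeq : C * st * t * (sα * st) = C₀ * t ^ 2 := by
    calc C * st * t * (sα * st) = (C * sα) * (st * st) * t := by ring
      _ = C₀ * t ^ 2 := by rw [hCsα, hstt]; ring
  have hfinal : |Real.sqrt (w u) - sα * st| ≤ C * st * t := by
    have hpos : 0 < sα * st := by positivity
    apply le_of_mul_le_mul_right _ hpos
    rw [hCeq]; exact hkey
  exact ⟨u, ⟨by linarith [hu.1], hu.2⟩, hXu, hwpos, hfinal⟩

lemma final_step (ρ Cb C t A : ℝ) (hC : Cb ≤ C) (ht : 0 < t)
    (hest : |Real.sqrt A - ρ * Real.sqrt t| ≤ Cb * Real.sqrt t * t) :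
    |Real.sqrt A / Real.pi - ρ / Real.pi * Real.sqrt t| ≤ C * Real.sqrt t * t := by
  have hπ := Real.pi_gt_three
  have h0 : Real.sqrt A / Real.pi - ρ / Real.pi * Real.sqrt t
      = (Real.sqrt A - ρ * Real.sqrt t) / Real.pi := by ring
  rw [h0, abs_div, abs_of_pos Real.pi_pos]
  have h1 : |Real.sqrt A - ρ * Real.sqrt t| / Real.pi ≤ |Real.sqrt A - ρ * Real.sqrt t| :=
    div_le_self (abs_nonneg _) (by linarith)
  have h2 : Cb * Real.sqrt t * t ≤ C * Real.sqrt t * t :=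
    mul_le_mul_of_nonneg_right
      (mul_le_mul_of_nonneg_right hC (Real.sqrt_nonneg t)) ht.le
  linarith


theorem statement4 (a : ℝ) (ha : 1 < a) :
    ∃ ρ₁ ρ₂ : ℝ, 0 < ρ₁ ∧ 0 < ρ₂ ∧
      ∃ C δ : ℝ, 0 < C ∧ 0 < δ ∧ δ < z1 a - z2 a ∧
        (∀ x ∈ Set.Ioo (z1 a - δ) (z1 a),
          |pasturRho a x - ρ₁ / Real.pi * Real.sqrt (z1 a - x)| ≤
            C * Real.sqrt (z1 a - x) * (z1 a - x)) ∧
        (∀ x ∈ Set.Ioo (z2 a) (z2 a + δ),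
          |pasturRho a x - ρ₂ / Real.pi * Real.sqrt (x - z2 a)| ≤
            C * Real.sqrt (x - z2 a) * (x - z2 a)) ∧
        (∀ x ∈ Set.Ioo (-z1 a) (-z1 a + δ),
          |pasturRho a x - ρ₁ / Real.pi * Real.sqrt (x + z1 a)| ≤
            C * Real.sqrt (x + z1 a) * (x + z1 a)) ∧
        (∀ x ∈ Set.Ioo (-z2 a - δ) (-z2 a),
          |pasturRho a x - ρ₂ / Real.pi * Real.sqrt (-z2 a - x)| ≤
            C * Real.sqrt (-z2 a - x) * (-z2 a - x)) := by
  -- right edge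
  obtain ⟨C₁, δ₁, hC₁, hδ₁, H₁⟩ := key_est (wf a) (Xf a) (wdf a) (Xdf a) (qBr a) 1 one_pos
    (hasDeriv_wf) (hasDeriv_Xf) (contDiff_wdf _) (contDiff_Xdf _)
    (hwq0 ha) (hwdq ha) (hXdq ha)
  rw [hXq ha] at H₁
  -- left edge, reflected
  have hw2 : ∀ u : ℝ, HasDerivAt (fun u : ℝ => wf a (-u)) (-(wdf a (-u))) u := by
    intro u
    have h := (hasDeriv_wf (a := a) (u := -u)).comp u (hasDerivAt_neg u)
    simpa [Function.comp_def] using h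
  have hX2 : ∀ u : ℝ, HasDerivAt (fun u : ℝ => -Xf a (-u)) (Xdf a (-u)) u := by
    intro u
    have h := ((hasDeriv_Xf (a := a) (u := -u)).comp u (hasDerivAt_neg u)).neg
    simpa [Function.comp_def, Pi.neg_def] using h
  have hcw2 : ContDiffAt ℝ 1 (fun u : ℝ => -(wdf a (-u))) (-pBr a) := by
    have hbase : ContDiffAt ℝ 1 (wdf a) (-(-pBr a)) := by
      rw [neg_neg]; exact contDiff_wdf _
    have h := (hbase.comp (-pBr a)
      (contDiff_neg.contDiffAt : ContDiffAt ℝ 1 (fun x : ℝ => -x) (-pBr a))).neg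
    simpa [Function.comp_def] using h
  have hcX2 : ContDiffAt ℝ 1 (fun u : ℝ => Xdf a (-u)) (-pBr a) := by
    have hbase : ContDiffAt ℝ 1 (Xdf a) (-(-pBr a)) := by
      rw [neg_neg]; exact contDiff_Xdf _
    have h := hbase.comp (-pBr a)
      (contDiff_neg.contDiffAt : ContDiffAt ℝ 1 (fun x : ℝ => -x) (-pBr a))
    simpa [Function.comp_def] using h
  obtain ⟨C₂, δ₂, hC₂, hδ₂, H₂⟩ := key_est (fun u => wf a (-u)) (fun u => -Xf a (-u))
    (fun u => -(wdf a (-u))) (fun u => Xdf a (-u)) (-pBr a) 1 one_pos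
    hw2 hX2
    hcw2 hcX2
    (show wf a (-(-pBr a)) = 0 by rw [neg_neg]; exact hwp0 ha)
    (show -(wdf a (-(-pBr a))) < 0 by rw [neg_neg]; linarith [hwdp ha])
    (show 0 < Xdf a (-(-pBr a)) by rw [neg_neg]; exact hXdp ha)
  simp only [neg_neg] at H₂
  rw [hXp ha] at H₂
  -- constants
  set ρ₁ := Real.sqrt (-wdf a (qBr a) / Xdf a (qBr a)) with hρ₁def
  set ρ₂ := Real.sqrt (wdf a (pBr a) / Xdf a (pBr a)) with hρ₂def
  have hρ₁ : 0 < ρ₁ := Real.sqrt_pos.2 (div_pos (by linarith [hwdq ha]) (hXdq ha))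
  have hρ₂ : 0 < ρ₂ := Real.sqrt_pos.2 (div_pos (hwdp ha) (hXdp ha))
  have hz := hz12 ha
  set C := max C₁ C₂ with hCdef
  have hCC₁ : C₁ ≤ C := le_max_left _ _
  have hCC₂ : C₂ ≤ C := le_max_right _ _
  have hC : 0 < C := lt_of_lt_of_le hC₁ hCC₁
  set δ := min (min δ₁ δ₂) ((z1 a - z2 a) / 2) with hδdef
  have hδ : 0 < δ := lt_min (lt_min hδ₁ hδ₂) (by linarith)
  have hδδ₁ : δ ≤ δ₁ := le_trans (min_le_left _ _) (min_le_left _ _)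
  have hδδ₂ : δ ≤ δ₂ := le_trans (min_le_left _ _) (min_le_right _ _)
  have hδz : δ < z1 a - z2 a := lt_of_le_of_lt (min_le_right _ _) (by linarith)
  refine ⟨ρ₁, ρ₂, hρ₁, hρ₂, C, δ, hC, hδ, hδz, ?_, ?_, ?_, ?_⟩
  · -- at z1 from the left
    intro x hx
    obtain ⟨hx1, hx2⟩ := hx
    obtain ⟨u, hu, hXu, hwu, hest⟩ := H₁ x ⟨by linarith, hx2⟩
    have hρ : pasturRho a x = Real.sqrt (wf a u) / Real.pi := by
      rw [← hXu]; exact rho_pos_side hwu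
    rw [hρ]
    exact final_step _ _ _ _ _ hCC₁ (by linarith) hest
  · -- at z2 from the right
    intro x hx
    obtain ⟨hx1, hx2⟩ := hx
    obtain ⟨u, hu, hXu, hwu, hest⟩ := H₂ (-x) ⟨by linarith, by linarith⟩
    have hxeq : x = Xf a (-u) := by linarith [hXu]
    have hρ : pasturRho a x = Real.sqrt (wf a (-u)) / Real.pi := by
      rw [hxeq]; exact rho_pos_side hwu
    rw [hρ]
    have ht : -z2 a - -x = x - z2 a := by ring
    rw [ht] at hest
    exact final_step _ _ _ _ _ hCC₂ (by linarith) hest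
  · -- at -z1 from the right
    intro x hx
    obtain ⟨hx1, hx2⟩ := hx
    obtain ⟨u, hu, hXu, hwu, hest⟩ := H₁ (-x) ⟨by linarith, by linarith⟩
    have hxeq : x = -Xf a u := by linarith [hXu]
    have hρ : pasturRho a x = Real.sqrt (wf a u) / Real.pi := by
      rw [hxeq]; exact rho_neg_side hwu
    rw [hρ]
    have ht : z1 a - -x = x + z1 a := by ring
    rw [ht] at hest
    exact final_step _ _ _ _ _ hCC₁ (by linarith) hest
  · -- at -z2 from the left
    intro x hx
    obtain ⟨hx1, hx2⟩ := hx
    obtain ⟨u, hu, hXu, hwu, hest⟩ := H₂ x ⟨by linarith, by linarith⟩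
    have hxeq : x = -Xf a (-u) := by linarith [hXu]
    have hρ : pasturRho a x = Real.sqrt (wf a (-u)) / Real.pi := by
      rw [hxeq]; exact rho_neg_side hwu
    rw [hρ]
    exact final_step _ _ _ _ _ hCC₂ (by linarith) hest


end
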